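/- arXiv:2112.13457 — 6 statements merged into one kernel-verified Lean document; each statement's English description precedes it below -/
import Mathlib

section
/- Any Novikov algebra satisfies the identity (xy, z, t) = (x,z,t)y. -/
theorem stmt5 {K N : Type*} [Field K] [NonUnitalNonAssocRing N] [Module K N]
    [SMulCommClass K N N] [IsScalarTower K N N]
    (hls : ∀ x y z : N, (x*y)*z - x*(y*z) = (y*x)*z - y*(x*z))
    (hrc : ∀ x y z : N, (x*y)*z = (x*z)*y)
    (x y z t : N) :
    ((x*y)*z)*t - (x*y)*(z*t) = (((x*z)*t) - x*(z*t))*y := by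
  rw [hrc x y z, hrc (x*z) y t, hrc x y (z*t), sub_mul]
end

section
/- Any Novikov algebra satisfies the identity (x, yz, t) = (x,y,t)z. -/
theorem stmt6 {K N : Type*} [Field K] [NonUnitalNonAssocRing N] [Module K N]
    [SMulCommClass K N N] [IsScalarTower K N N]
    (hls : ∀ x y z : N, (x*y)*z - x*(y*z) = (y*x)*z - y*(x*z))
    (hrc : ∀ x y z : N, (x*y)*z = (x*z)*y)
    (x y z t : N) :
    (x*(y*z))*t - x*((y*z)*t) = ((x*y)*t - x*(y*t))*z := by
  rw [hls x (y*z) t, hrc y z x, hrc (y*x) z t, hrc y z (x*t), hls x y t, sub_mul]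
end

section
/- In any Novikov algebra N, the linear span of all associators (N,N,N) is a two-sided ideal of N. -/
theorem stmt8 {K N : Type*} [Field K] [NonUnitalNonAssocRing N] [Module K N]
    [SMulCommClass K N N] [IsScalarTower K N N]
    (hls : ∀ x y z : N, (x*y)*z - x*(y*z) = (y*x)*z - y*(x*z))
    (hrc : ∀ x y z : N, (x*y)*z = (x*z)*y) :
    ∀ a ∈ Submodule.span K {w : N | ∃ u v t : N, w = (u*v)*t - u*(v*t)}, ∀ n : N,
      n * a ∈ Submodule.span K {w : N | ∃ u v t : N, w = (u*v)*t - u*(v*t)} ∧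
      a * n ∈ Submodule.span K {w : N | ∃ u v t : N, w = (u*v)*t - u*(v*t)} := by
  intro a ha n
  have key : ∀ x y z : N,
      (x*y)*z - x*(y*z) ∈ Submodule.span K {w : N | ∃ u v t : N, w = (u*v)*t - u*(v*t)} :=
    fun x y z => Submodule.subset_span ⟨x, y, z, rfl⟩
  constructor
  · induction ha using Submodule.span_induction with
    | mem w hw =>
      obtain ⟨u, v, t, rfl⟩ := hw
      have h : n * ((u*v)*t - u*(v*t)) =
          (((n*u)*v)*t - (n*u)*(v*t)) + ((n*u)*(v*t) - n*(u*(v*t)))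
          - (((n*t)*u)*v - (n*t)*(u*v)) - ((n*(u*v))*t - n*((u*v)*t)) := by
        rw [mul_sub, hrc (n*u) v t, hrc n u t, hrc n (u*v) t]
        abel
      rw [h]
      exact sub_mem (sub_mem (add_mem (key (n*u) v t) (key n u (v*t))) (key (n*t) u v))
        (key n (u*v) t)
    | zero => rw [mul_zero]; exact zero_mem _
    | add x y hx hy ihx ihy => rw [mul_add]; exact add_mem ihx ihy
    | smul c x hx ih => rw [mul_smul_comm]; exact Submodule.smul_mem _ c ih
  · induction ha using Submodule.span_induction with
    | mem w hw =>
      obtain ⟨u, v, t, rfl⟩ := hw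
      have h : ((u*v)*t - u*(v*t)) * n = ((u*n)*v)*t - (u*n)*(v*t) := by
        rw [sub_mul, hrc (u*v) t n, hrc u v n, hrc u (v*t) n]
      rw [h]
      exact key (u*n) v t
    | zero => rw [zero_mul]; exact zero_mem _
    | add x y hx hy ihx ihy => rw [add_mul]; exact add_mem ihx ihy
    | smul c x hx ih => rw [smul_mul_assoc]; exact Submodule.smul_mem _ c ih
end

section
/- Any Novikov algebra over a field of characteristic not equal to 2 satisfies the identity 2·x[a,b] = 2[[x,a],b] + 2[a,[x,b]] + [ax,b] + [a,bx]. -/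
theorem stmt11 {K N : Type*} [Field K] [NonUnitalNonAssocRing N] [Module K N]
    [SMulCommClass K N N] [IsScalarTower K N N]
    (hchar : (2 : K) ≠ 0)
    (hls : ∀ x y z : N, (x*y)*z - x*(y*z) = (y*x)*z - y*(x*z))
    (hrc : ∀ x y z : N, (x*y)*z = (x*z)*y)
    (x a b : N) :
    2 • (x*(a*b - b*a)) =
      2 • ((x*a - a*x)*b - b*(x*a - a*x)) + 2 • (a*(x*b - b*x) - (x*b - b*x)*a)
        + ((a*x)*b - b*(a*x)) + (a*(b*x) - (b*x)*a) := by
  have h1 := hls x a b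
  have h2 := hls x b a
  have h3 := hls a b x
  have h4 := hrc x a b
  have h5 := hrc a x b
  have h6 := hrc b x a
  simp only [mul_sub, sub_mul, smul_sub]
  linear_combination (norm := abel1) (-(h1+h1) + (h2+h2) - h3 - h5 + h6)
end

section
/- Let N be a Novikov algebra over a field of characteristic not 2. If I and J are two-sided ideals of N, then the linear span of [I,J] = span{[a,b] : a in I, b in J} is a two-sided ideal of N. In particular, the commutator space [N,N] is an ideal of N. -/
/-- The span of commutators `[I, J]` of two submodules. -/
def commSpan (K : Type*) {N : Type*} [Field K] [NonUnitalNonAssocRing N] [Module K N]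
    (I J : Submodule K N) : Submodule K N :=
  Submodule.span K {w : N | ∃ a ∈ I, ∃ b ∈ J, w = a * b - b * a}

theorem commSpan_aux {K N : Type*} [Field K] [NonUnitalNonAssocRing N] [Module K N]
    [SMulCommClass K N N] [IsScalarTower K N N]
    (hchar : (2 : K) ≠ 0)
    (hls : ∀ x y z : N, (x*y)*z - x*(y*z) = (y*x)*z - y*(x*z))
    (hrc : ∀ x y z : N, (x*y)*z = (x*z)*y)
    (I J : Submodule K N)
    (hI : ∀ n : N, ∀ a ∈ I, n * a ∈ I ∧ a * n ∈ I)
    (hJ : ∀ n : N, ∀ b ∈ J, n * b ∈ J ∧ b * n ∈ J) :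
    ∀ c ∈ commSpan K I J, ∀ n : N, n * c ∈ commSpan K I J ∧ c * n ∈ commSpan K I J := by
  set S := commSpan K I J with hSdef
  have hgen : ∀ a ∈ I, ∀ b ∈ J, a * b - b * a ∈ S :=
    fun a ha b hb => Submodule.subset_span ⟨a, ha, b, hb, rfl⟩
  have hright : ∀ (n : N), ∀ a ∈ I, ∀ b ∈ J, (a*b - b*a) * n ∈ S := by
    intro n a ha b hb
    have g1 : a * (b*n) - (b*n) * a ∈ S := hgen a ha (b*n) (hJ n b hb).2
    have g2 : (a*n) * b - b * (a*n) ∈ S := hgen (a*n) (hI n a ha).2 b hb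
    have hE : a*(b*n) - b*(a*n) = (a*n)*b - (b*n)*a := by
      have h := hls a b n
      rw [hrc a b n, hrc b a n] at h
      rw [sub_eq_sub_iff_add_eq_add] at h ⊢
      rw [h]; abel
    have h2 : (2:K) • ((a*b - b*a)*n) = (a*(b*n) - (b*n)*a) + ((a*n)*b - b*(a*n)) := by
      rw [two_smul, sub_mul, hrc a b n, hrc b a n]
      nth_rewrite 1 [← hE]
      abel
    have heq : (a*b - b*a)*n = (2:K)⁻¹ • ((a*(b*n) - (b*n)*a) + ((a*n)*b - b*(a*n))) := by
      rw [← h2, inv_smul_smul₀ hchar]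
    rw [heq]
    exact S.smul_mem _ (S.add_mem g1 g2)
  have hleft : ∀ (n : N), ∀ a ∈ I, ∀ b ∈ J, n * (a*b - b*a) ∈ S := by
    intro n a ha b hb
    have g3 : (n*a)*b - b*(n*a) ∈ S := hgen (n*a) (hI n a ha).1 b hb
    have g4 : a*(n*b) - (n*b)*a ∈ S := hgen a ha (n*b) (hJ n b hb).1
    have g5 : (a*b - b*a)*n ∈ S := hright n a ha b hb
    have h1 := hls n a b
    rw [sub_eq_sub_iff_add_eq_add] at h1
    have e1 : n*(a*b) = (n*a)*b + a*(n*b) - (a*n)*b := by rw [h1]; abel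
    have h2 := hls n b a
    rw [sub_eq_sub_iff_add_eq_add] at h2
    have e2 : n*(b*a) = (n*b)*a + b*(n*a) - (b*n)*a := by rw [h2]; abel
    have key : n*(a*b - b*a)
        = (((n*a)*b - b*(n*a)) + (a*(n*b) - (n*b)*a)) - (a*b - b*a)*n := by
      rw [mul_sub, e1, e2, sub_mul, hrc a b n, hrc b a n]
      abel
    rw [key]
    exact S.sub_mem (S.add_mem g3 g4) g5
  intro c hc n
  refine Submodule.span_induction ?_ ?_ ?_ ?_ hc
  · rintro w ⟨a, ha, b, hb, rfl⟩
    exact ⟨hleft n a ha b hb, hright n a ha b hb⟩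
  · simp
  · rintro x y _ _ ⟨hx1, hx2⟩ ⟨hy1, hy2⟩
    exact ⟨by rw [mul_add]; exact S.add_mem hx1 hy1,
           by rw [add_mul]; exact S.add_mem hx2 hy2⟩
  · rintro k x _ ⟨hx1, hx2⟩
    exact ⟨by rw [mul_smul_comm]; exact S.smul_mem k hx1,
           by rw [smul_mul_assoc]; exact S.smul_mem k hx2⟩

theorem stmt12 {K N : Type*} [Field K] [NonUnitalNonAssocRing N] [Module K N]
    [SMulCommClass K N N] [IsScalarTower K N N]
    (hchar : (2 : K) ≠ 0)
    (hls : ∀ x y z : N, (x*y)*z - x*(y*z) = (y*x)*z - y*(x*z))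
    (hrc : ∀ x y z : N, (x*y)*z = (x*z)*y)
    (I J : Submodule K N)
    (hI : ∀ n : N, ∀ a ∈ I, n * a ∈ I ∧ a * n ∈ I)
    (hJ : ∀ n : N, ∀ b ∈ J, n * b ∈ J ∧ b * n ∈ J) :
    (∀ c ∈ commSpan K I J, ∀ n : N, n * c ∈ commSpan K I J ∧ c * n ∈ commSpan K I J) ∧
    (∀ c ∈ commSpan K (⊤ : Submodule K N) ⊤, ∀ n : N,
      n * c ∈ commSpan K (⊤ : Submodule K N) ⊤ ∧ c * n ∈ commSpan K (⊤ : Submodule K N) ⊤) := by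
  refine ⟨commSpan_aux hchar hls hrc I J hI hJ, commSpan_aux hchar hls hrc ⊤ ⊤ ?_ ?_⟩ <;>
    exact fun n a _ => ⟨Submodule.mem_top, Submodule.mem_top⟩
end

section
/- Any Lie-metabelian Novikov algebra over a field of characteristic not 2 satisfies the identity (x,[y,z],t)[a,b] = 0. -/
private theorem novikov_master_aux {N : Type*} [NonUnitalNonAssocRing N]
    (hls : ∀ x y z : N, (x*y)*z - x*(y*z) = (y*x)*z - y*(x*z))
    (hrc : ∀ x y z : N, (x*y)*z = (x*z)*y)
    (x t u c : N) :
    (4:ℤ) • (((x*u)*t - x*(u*t))*c) + ((u*(x*(c*t) - (c*t)*x) - (x*(c*t) - (c*t)*x)*u) + (u*(c*(x*t) - (x*t)*c) - (c*(x*t) - (x*t)*c)*u) + (2:ℤ) • (c*(u*(x*t)) - (u*(x*t))*c) + (2:ℤ) • ((x*u - u*x)*(c*t) - (c*t)*(x*u - u*x)) + (2:ℤ) • ((u*x)*(c*t) - (c*t)*(u*x))) = (c*(x*(u*t) - (u*t)*x) - (x*(u*t) - (u*t)*x)*c) + (3:ℤ) • (c*(u*(x*t) - (x*t)*u) - (u*(x*t)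 - (x*t)*u)*c) := by
  have j0 : (((x*u)*(c*t) - (x*(c*t))*u)) = 0 := by rw [sub_eq_zero_of_eq (hrc x u (c*t))]
  have j1 : (((u*x)*(c*t) - (u*(c*t))*x)) = 0 := by rw [sub_eq_zero_of_eq (hrc u x (c*t))]
  have j2 : (((u*t)*(c*x) - (u*(c*x))*t)) = 0 := by rw [sub_eq_zero_of_eq (hrc u t (c*x))]
  have j3 : ((((u*c)*(x*t) - u*(c*(x*t))) - ((c*u)*(x*t) - c*(u*(x*t))))) = 0 := by rw [sub_eq_zero_of_eq (hls u c (x*t))]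
  have j4 : (((u*c)*(x*t) - (u*(x*t))*c)) = 0 := by rw [sub_eq_zero_of_eq (hrc u c (x*t))]
  have j5 : ((((u*(c*x))*t - u*((c*x)*t)) - (((c*x)*u)*t - (c*x)*(u*t)))) = 0 := by rw [sub_eq_zero_of_eq (hls u (c*x) t)]
  have j6 : ((((u*(c*t))*x - u*((c*t)*x)) - (((c*t)*u)*x - (c*t)*(u*x)))) = 0 := by rw [sub_eq_zero_of_eq (hls u (c*t) x)]
  have j7 : (((c*x)*(u*t) - (c*(u*t))*x)) = 0 := by rw [sub_eq_zero_of_eq (hrc c x (u*t))]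
  have j8 : (((c*t)*(x*u) - (c*(x*u))*t)) = 0 := by rw [sub_eq_zero_of_eq (hrc c t (x*u))]
  have j9 : (((c*t)*(u*x) - (c*(u*x))*t)) = 0 := by rw [sub_eq_zero_of_eq (hrc c t (u*x))]
  have j10 : (((c*u)*(x*t) - (c*(x*t))*u)) = 0 := by rw [sub_eq_zero_of_eq (hrc c u (x*t))]
  have j11 : ((((c*(x*u))*t - c*((x*u)*t)) - (((x*u)*c)*t - (x*u)*(c*t)))) = 0 := by rw [sub_eq_zero_of_eq (hls c (x*u) t)]
  have j12 : ((((c*(u*x))*t - c*((u*x)*t)) - (((u*x)*c)*t - (u*x)*(c*t)))) = 0 := by rw [sub_eq_zero_of_eq (hls c (u*x) t)]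
  have j13 : ((((c*(u*t))*x - c*((u*t)*x)) - (((u*t)*c)*x - (u*t)*(c*x)))) = 0 := by rw [sub_eq_zero_of_eq (hls c (u*t) x)]
  have j14 : ((((x*t)*u)*c - ((x*t)*c)*u)) = 0 := by rw [sub_eq_zero_of_eq (hrc (x*t) u c)]
  have j15 : ((((x*u)*t)*c - ((x*u)*c)*t)) = 0 := by rw [sub_eq_zero_of_eq (hrc (x*u) t c)]
  have j16 : ((((u*x)*t)*c - ((u*x)*c)*t)) = 0 := by rw [sub_eq_zero_of_eq (hrc (u*x) t c)]
  have j17 : ((((c*x)*t)*u - ((c*x)*u)*t)) = 0 := by rw [sub_eq_zero_of_eq (hrc (c*x) t u)]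
  have j18 : ((((u*t)*x)*c - ((u*t)*c)*x)) = 0 := by rw [sub_eq_zero_of_eq (hrc (u*t) x c)]
  have j19 : ((((c*t)*x)*u - ((c*t)*u)*x)) = 0 := by rw [sub_eq_zero_of_eq (hrc (c*t) x u)]
  have j20 : (c*((x*t)*u - (x*u)*t)) = 0 := by rw [sub_eq_zero_of_eq (hrc x t u), mul_zero]
  have j21 : (((x*t)*u - (x*u)*t)*c) = 0 := by rw [sub_eq_zero_of_eq (hrc x t u), zero_mul]
  have j22 : (c*(((x*u)*t - x*(u*t)) - ((u*x)*t - u*(x*t)))) = 0 := by rw [sub_eq_zero_of_eq (hls x u t), mul_zero]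
  have j23 : ((((x*u)*t - x*(u*t)) - ((u*x)*t - u*(x*t)))*c) = 0 := by rw [sub_eq_zero_of_eq (hls x u t), zero_mul]
  have j24 : (c*((u*x)*t - (u*t)*x)) = 0 := by rw [sub_eq_zero_of_eq (hrc u x t), mul_zero]
  have j25 : (((u*x)*t - (u*t)*x)*c) = 0 := by rw [sub_eq_zero_of_eq (hrc u x t), zero_mul]
  have j26 : (u*((x*t)*c - (x*c)*t)) = 0 := by rw [sub_eq_zero_of_eq (hrc x t c), mul_zero]
  have j27 : (((x*t)*c - (x*c)*t)*u) = 0 := by rw [sub_eq_zero_of_eq (hrc x t c), zero_mul]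
  have j28 : (u*(((x*c)*t - x*(c*t)) - ((c*x)*t - c*(x*t)))) = 0 := by rw [sub_eq_zero_of_eq (hls x c t), mul_zero]
  have j29 : ((((x*c)*t - x*(c*t)) - ((c*x)*t - c*(x*t)))*u) = 0 := by rw [sub_eq_zero_of_eq (hls x c t), zero_mul]
  have j30 : (u*((c*x)*t - (c*t)*x)) = 0 := by rw [sub_eq_zero_of_eq (hrc c x t), mul_zero]
  have key : ((4:ℤ) • (((x*u)*t - x*(u*t))*c) + ((u*(x*(c*t) - (c*t)*x) - (x*(c*t) - (c*t)*x)*u) + (u*(c*(x*t) - (x*t)*c) - (c*(x*t) - (x*t)*c)*u) + (2:ℤ) • (c*(u*(x*t)) - (u*(x*t))*c) + (2:ℤ) • ((x*u - u*x)*(c*t) - (c*t)*(x*u - u*x)) + (2:ℤ) • ((u*x)*(c*t) - (c*t)*(u*x)))) - ((c*(x*(u*t) - (u*t)*x) - (x*(u*t) - (u*t)*x)*c) + (3:ℤ) • (c*(u*(x*t) - (x*t)*u) - (u*(x*t) - (x*t)*u)*c)) = (4:ℤ) • (((x*u)*(c*t) - (x*(c*t))*u)) + (-1:ℤ) • (((u*x)*(c*t)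 - (u*(c*t))*x)) + (3:ℤ) • (((u*t)*(c*x) - (u*(c*x))*t)) + (-2:ℤ) • ((((u*c)*(x*t) - u*(c*(x*t))) - ((c*u)*(x*t) - c*(u*(x*t))))) + (2:ℤ) • (((u*c)*(x*t) - (u*(x*t))*c)) + (3:ℤ) • ((((u*(c*x))*t - u*((c*x)*t)) - (((c*x)*u)*t - (c*x)*(u*t)))) + (-1:ℤ) • ((((u*(c*t))*x - u*((c*t)*x)) - (((c*t)*u)*x - (c*t)*(u*x)))) + (-3:ℤ) • (((c*x)*(u*t) - (c*(u*t))*x)) + (-2:ℤ) • (((c*t)*(x*u) - (c*(x*u))*t)) + (1:ℤ) • (((c*t)*(u*x) - (c*(u*x))*t)) + (-2:ℤ) • (((c*u)*(x*t) - (c*(x*t))*u)) + (-2:ℤ) • ((((c*(x*u))*t - c*((x*u)*t)) - (((x*u)*c)*t - (x*u)*(c*t)))) + (1:ℤ) • ((((c*(u*x))*t - c*((u*x)*t)) - (((u*x)*c)*t - (u*x)*(c*t)))) + (-3:ℤ) • ((((c*(u*t))*x - c*((u*t)*x)) - (((u*t)*c)*x - (u*t)*(c*x)))) + (-4:ℤ)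 • ((((x*t)*u)*c - ((x*t)*c)*u)) + (2:ℤ) • ((((x*u)*t)*c - ((x*u)*c)*t)) + (-1:ℤ) • ((((u*x)*t)*c - ((u*x)*c)*t)) + (-3:ℤ) • ((((c*x)*t)*u - ((c*x)*u)*t)) + (3:ℤ) • ((((u*t)*x)*c - ((u*t)*c)*x)) + (1:ℤ) • ((((c*t)*x)*u - ((c*t)*u)*x)) + (3:ℤ) • (c*((x*t)*u - (x*u)*t)) + (1:ℤ) • (((x*t)*u - (x*u)*t)*c) + (1:ℤ) • (c*(((x*u)*t - x*(u*t)) - ((u*x)*t - u*(x*t)))) + (3:ℤ) • ((((x*u)*t - x*(u*t)) - ((u*x)*t - u*(x*t)))*c) + (2:ℤ) • (c*((u*x)*t - (u*t)*x)) + (4:ℤ) • (((u*x)*t - (u*t)*x)*c) + (-1:ℤ) • (u*((x*t)*c - (x*c)*t)) + (-3:ℤ) • (((x*t)*c - (x*c)*t)*u) + (-1:ℤ) • (u*(((x*c)*t - x*(c*t)) - ((c*x)*t - c*(x*t)))) + (-3:ℤ) • ((((x*c)*t - x*(c*t)) - ((c*x)*t - c*(x*t)))*u) + (2:ℤ) •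 (u*((c*x)*t - (c*t)*x)) := by
    simp only [mul_sub, sub_mul, mul_add, add_mul, smul_sub, smul_add]
    abel
  rw [j0, j1, j2, j3, j4, j5, j6, j7, j8, j9, j10, j11, j12, j13, j14, j15, j16, j17, j18, j19, j20, j21, j22, j23, j24, j25, j26, j27, j28, j29, j30] at key
  simp only [smul_zero, add_zero, zero_add] at key
  exact sub_eq_zero.mp key


theorem stmt14 {K N : Type*} [Field K] [NonUnitalNonAssocRing N] [Module K N]
    [SMulCommClass K N N] [IsScalarTower K N N]
    (hchar : (2 : K) ≠ 0)
    (hls : ∀ x y z : N, (x*y)*z - x*(y*z) = (y*x)*z - y*(x*z))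
    (hrc : ∀ x y z : N, (x*y)*z = (x*z)*y)
    (hmet : ∀ x y z t : N, (x*y - y*x)*(z*t - t*z) - (z*t - t*z)*(x*y - y*x) = 0)
    (x y z t a b : N) :
    ((x*(y*z - z*y))*t - x*((y*z - z*y)*t))*(a*b - b*a) = 0 := by
  have half : ∀ v : N, v + v = 0 → v = 0 := by
    intro v hv
    have h2 : (2:K) • v = 0 := by rw [two_smul]; exact hv
    calc v = (2:K)⁻¹ • ((2:K) • v) := by rw [smul_smul, inv_mul_cancel₀ hchar, one_smul]
    _ = 0 := by rw [h2, smul_zero]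
  have flip : ∀ A B : N, A - B = 0 → B - A = 0 := by
    intro A B h
    rw [← neg_sub A B, h, neg_zero]
  have F5 : ∀ p q f : N, (p*f)*q - q*(p*f) + (p*(q*f) - (q*f)*p) = (p*q - q*p)*f + (p*q - q*p)*f := by
    intro p q f
    have h := hls p q f
    rw [hrc p f q, hrc q f p]
    have hz : ((p*q)*f - p*(q*f)) - ((q*p)*f - q*(p*f)) = 0 := sub_eq_zero_of_eq h
    have key : ((p*q)*f - q*(p*f) + (p*(q*f) - (q*p)*f)) - ((p*q - q*p)*f + (p*q - q*p)*f)
        = -(((p*q)*f - p*(q*f)) - ((q*p)*f - q*(p*f))) := by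
      simp only [sub_mul]; abel
    rw [hz, neg_zero] at key
    exact sub_eq_zero.mp key
  have brkt : ∀ p q f w : N,
      (w*((p*f)*q - q*(p*f)) - ((p*f)*q - q*(p*f))*w = 0) →
      (w*(p*(q*f) - (q*f)*p) - (p*(q*f) - (q*f)*p)*w = 0) →
      w*((p*q - q*p)*f) - ((p*q - q*p)*f)*w = 0 := by
    intro p q f w h1 h2
    apply half
    have key : (w*((p*q - q*p)*f) - ((p*q - q*p)*f)*w) + (w*((p*q - q*p)*f) - ((p*q - q*p)*f)*w)
        = (w*((p*f)*q - q*(p*f)) - ((p*f)*q - q*(p*f))*w) + (w*(p*(q*f) - (q*f)*p) - (p*(q*f) - (q*f)*p)*w) := by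
      calc (w*((p*q - q*p)*f) - ((p*q - q*p)*f)*w) + (w*((p*q - q*p)*f) - ((p*q - q*p)*f)*w)
          = w*((p*q - q*p)*f + (p*q - q*p)*f) - ((p*q - q*p)*f + (p*q - q*p)*f)*w := by
            simp only [mul_add, add_mul]; abel
      _ = w*((p*f)*q - q*(p*f) + (p*(q*f) - (q*f)*p)) - ((p*f)*q - q*(p*f) + (p*(q*f) - (q*f)*p))*w := by
            rw [← F5 p q f]
      _ = (w*((p*f)*q - q*(p*f)) - ((p*f)*q - q*(p*f))*w) + (w*(p*(q*f) - (q*f)*p) - (p*(q*f) - (q*f)*p)*w) := by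
            simp only [mul_add, add_mul]; abel
    rw [key, h1, h2, add_zero]
  have hI1 : (y*z - z*y)*(x*((a*b - b*a)*t) - ((a*b - b*a)*t)*x) - (x*((a*b - b*a)*t) - ((a*b - b*a)*t)*x)*(y*z - z*y) = 0 := hmet y z x ((a*b - b*a)*t)
  have hI2 : (y*z - z*y)*((a*b - b*a)*(x*t) - (x*t)*(a*b - b*a)) - ((a*b - b*a)*(x*t) - (x*t)*(a*b - b*a))*(y*z - z*y) = 0 := hmet y z (a*b - b*a) (x*t)
  have hI3 : (a*b - b*a)*(x*((y*z - z*y)*t) - ((y*z - z*y)*t)*x) - (x*((y*z - z*y)*t) - ((y*z - z*y)*t)*x)*(a*b - b*a) = 0 := hmet a b x ((y*z - z*y)*t)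
  have hI4 : (a*b - b*a)*((y*z - z*y)*(x*t) - (x*t)*(y*z - z*y)) - ((y*z - z*y)*(x*t) - (x*t)*(y*z - z*y))*(a*b - b*a) = 0 := hmet a b (y*z - z*y) (x*t)
  have hI5 : (a*b - b*a)*((y*z - z*y)*(x*t)) - ((y*z - z*y)*(x*t))*(a*b - b*a) = 0 :=
    brkt y z (x*t) (a*b - b*a) (hmet a b (y*(x*t)) z) (hmet a b y (z*(x*t)))
  have hI6 : (x*(y*z - z*y) - (y*z - z*y)*x)*((a*b - b*a)*t) - ((a*b - b*a)*t)*(x*(y*z - z*y) - (y*z - z*y)*x) = 0 :=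
    brkt a b t (x*(y*z - z*y) - (y*z - z*y)*x) (hmet x (y*z - z*y) (a*t) b) (hmet x (y*z - z*y) a (b*t))
  have hA1 : ((y*z - z*y)*x)*((a*t)*b - b*(a*t)) - ((a*t)*b - b*(a*t))*((y*z - z*y)*x) = 0 :=
    flip _ _ (brkt y z x ((a*t)*b - b*(a*t)) (flip _ _ (hmet (y*x) z (a*t) b)) (flip _ _ (hmet y (z*x) (a*t) b)))
  have hA2 : ((y*z - z*y)*x)*(a*(b*t) - (b*t)*a) - (a*(b*t) - (b*t)*a)*((y*z - z*y)*x) = 0 :=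
    flip _ _ (brkt y z x (a*(b*t) - (b*t)*a) (flip _ _ (hmet (y*x) z a (b*t))) (flip _ _ (hmet y (z*x) a (b*t))))
  have hI7 : ((y*z - z*y)*x)*((a*b - b*a)*t) - ((a*b - b*a)*t)*((y*z - z*y)*x) = 0 :=
    brkt a b t ((y*z - z*y)*x) hA1 hA2
  have m := novikov_master_aux hls hrc x t (y*z - z*y) (a*b - b*a)
  rw [hI1, hI2, hI3, hI4, hI5, hI6, hI7] at m
  simp only [smul_zero, add_zero, zero_add] at m
  have h4 : ((x*(y*z - z*y))*t - x*((y*z - z*y)*t))*(a*b - b*a) + ((x*(y*z - z*y))*t - x*((y*z - z*y)*t))*(a*b - b*a) + (((x*(y*z - z*y))*t - x*((y*z - z*y)*t))*(a*b - b*a) + ((x*(y*z - z*y))*t - x*((y*z - z*y)*t))*(a*b - b*a)) = (4:ℤ) • (((x*(y*z - z*y))*t - x*((y*z - z*y)*t))*(a*b - b*a)) := by abel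
  exact half _ (half _ (h4.trans m))
end
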